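/- Let G be a connected simple undirected K-regular graph on N vertices with 2 ≤ K ≤ N−1, adjacency matrix A, and suppose θ = N/(2K). Define Φ(a) = θK/2 − (θK/N)·Σ_{i=1}^N a_i + (1/(2K))·aᵀ A a for a ∈ {0,1}^N. Then the set of maximizers of Φ over {0,1}^N is exactly {0_N, 1_N}, and Φ(0_N) = Φ(1_N) = N/4. -/

import Mathlib

open Finset Matrix

lemma walk_closed {N : ℕ} {G : SimpleGraph (Fin N)} {u v : Fin N} (w : G.Walk u v)
    (S : Fin N → Prop) (hS : ∀ i j, G.Adj i j → S i → S j) (hu : S u) : S v := by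
  induction w with
  | nil => exact hu
  | cons h p ih => exact ih (hS _ _ h hu)

/-- For a connected `K`-regular graph and `θ = N/(2K)`, the set of
maximizers of `Φ` over `{0,1}^N` is exactly `{0_N, 1_N}`, and `Φ(0_N) = Φ(1_N) = N/4`. -/
theorem stmt_6 (N K : ℕ) (hK : 2 ≤ K) (hKN : K ≤ N - 1)
    (G : SimpleGraph (Fin N)) [DecidableRel G.Adj]
    (hconn : G.Connected) (hreg : G.IsRegularOfDegree K)
    (θ : ℝ) (hθ : θ = (N : ℝ) / (2 * (K : ℝ)))
    (Φ : (Fin N → ℝ) → ℝ)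
    (hΦ : ∀ a, Φ a = θ * (K : ℝ) / 2 - (θ * (K : ℝ) / (N : ℝ)) * (∑ i, a i)
        + (1 / (2 * (K : ℝ))) * (a ⬝ᵥ (G.adjMatrix ℝ) *ᵥ a)) :
    Φ (fun _ => (0 : ℝ)) = (N : ℝ) / 4 ∧ Φ (fun _ => (1 : ℝ)) = (N : ℝ) / 4 ∧
    ∀ b : Fin N → ℝ, (∀ i, b i = 0 ∨ b i = 1) →
      ((∀ c : Fin N → ℝ, (∀ i, c i = 0 ∨ c i = 1) → Φ c ≤ Φ b) ↔
        (b = (fun _ => (0 : ℝ)) ∨ b = (fun _ => (1 : ℝ)))) := by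
  have hN3 : 3 ≤ N := by omega
  have hK0 : (K : ℝ) ≠ 0 := by
    have : (0:ℝ) < K := by exact_mod_cast Nat.lt_of_lt_of_le (by norm_num) hK
    linarith
  have hKpos : (0:ℝ) < K := lt_of_le_of_ne (by positivity) (Ne.symm hK0)
  have hN0 : (N : ℝ) ≠ 0 := by
    have : (0:ℝ) < N := by exact_mod_cast Nat.lt_of_lt_of_le (by norm_num) hN3
    linarith
  have hθK : θ * (K : ℝ) = (N : ℝ) / 2 := by rw [hθ]; field_simp
  have hrow : ∀ i, ∑ j, (G.adjMatrix ℝ) i j = (K : ℝ) := by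
    intro i
    have := G.adjMatrix_mulVec_const_apply_of_regular (a := (1:ℝ)) hreg (v := i)
    simpa [mulVec, dotProduct] using this
  have hquad : ∀ a : Fin N → ℝ,
      a ⬝ᵥ (G.adjMatrix ℝ) *ᵥ a = ∑ i, a i * ∑ j, (G.adjMatrix ℝ) i j * a j := by
    intro a; simp [dotProduct, mulVec]
  -- key reformulation of Φ on any vector
  have hkey : ∀ a : Fin N → ℝ,
      Φ a = (N : ℝ)/4 + (1/(2*(K:ℝ))) * ∑ i, a i * ((∑ j, (G.adjMatrix ℝ) i j * a j) - K) := by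
    intro a
    have h1 : ∑ i, a i * ((∑ j, (G.adjMatrix ℝ) i j * a j) - K)
        = (a ⬝ᵥ (G.adjMatrix ℝ) *ᵥ a) - (K:ℝ) * ∑ i, a i := by
      rw [hquad]
      rw [Finset.mul_sum]
      rw [← Finset.sum_sub_distrib]
      congr 1; funext i; ring
    rw [hΦ, h1, hθK]
    field_simp
    ring
  -- inner sum bound for binary vectors
  have hinner : ∀ (c : Fin N → ℝ), (∀ i, c i = 0 ∨ c i = 1) →
      ∀ i, ∑ j, (G.adjMatrix ℝ) i j * c j ≤ (K : ℝ) := by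
    intro c hc i
    rw [← hrow i]
    apply Finset.sum_le_sum
    intro j _
    rcases hc j with h | h <;> simp [h, G.adjMatrix_apply] <;> split <;> norm_num
  have hterm : ∀ (c : Fin N → ℝ), (∀ i, c i = 0 ∨ c i = 1) →
      ∀ i ∈ Finset.univ, c i * ((∑ j, (G.adjMatrix ℝ) i j * c j) - K) ≤ 0 := by
    intro c hc i _
    have h1 := hinner c hc i
    rcases hc i with h | h
    · rw [h, zero_mul]
    · rw [h, one_mul]; linarith
  -- the universal upper bound
  have hub : ∀ (c : Fin N → ℝ), (∀ i, c i = 0 ∨ c i = 1) → Φ c ≤ (N : ℝ)/4 := by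
    intro c hc
    rw [hkey]
    have h1 : ∑ i, c i * ((∑ j, (G.adjMatrix ℝ) i j * c j) - K) ≤ 0 :=
      Finset.sum_nonpos (hterm c hc)
    have h2 : (0:ℝ) ≤ 1/(2*(K:ℝ)) := by positivity
    nlinarith
  have hΦ0 : Φ (fun _ => (0:ℝ)) = (N:ℝ)/4 := by
    rw [hkey]; simp
  have hΦ1 : Φ (fun _ => (1:ℝ)) = (N:ℝ)/4 := by
    rw [hkey]
    have h1 : ∀ i : Fin N, ∑ j, (G.adjMatrix ℝ) i j * (1:ℝ) = (K:ℝ) := by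
      intro i; simpa using hrow i
    have h2 : ∑ i : Fin N, (1:ℝ) * ((∑ j, (G.adjMatrix ℝ) i j * (1:ℝ)) - K) = 0 :=
      Finset.sum_eq_zero (fun i _ => by rw [h1 i]; ring)
    rw [h2]; ring
  refine ⟨hΦ0, hΦ1, ?_⟩
  intro b hb
  constructor
  · intro hmax
    -- Φ b = N/4
    have hbeq : Φ b = (N:ℝ)/4 := le_antisymm (hub b hb) (hΦ0 ▸ hmax _ (fun i => Or.inl rfl))
    have hsum0 : ∑ i, b i * ((∑ j, (G.adjMatrix ℝ) i j * b j) - K) = 0 := by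
      have := hkey b
      rw [hbeq] at this
      have h2 : (1/(2*(K:ℝ))) * ∑ i, b i * ((∑ j, (G.adjMatrix ℝ) i j * b j) - K) = 0 := by
        linarith
      have h3 : (1/(2*(K:ℝ))) ≠ 0 := by positivity
      exact (mul_eq_zero.mp h2).resolve_left h3
    have hterm0 : ∀ i, b i * ((∑ j, (G.adjMatrix ℝ) i j * b j) - K) = 0 := by
      intro i
      have := (Finset.sum_eq_zero_iff_of_nonpos (hterm b hb)).mp hsum0
      exact this i (Finset.mem_univ i)
    -- closed under adjacency
    have hclosed : ∀ i j, G.Adj i j → b i = 1 → b j = 1 := by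
      intro i j hadj hbi
      have h1 : (∑ k, (G.adjMatrix ℝ) i k * b k) = K := by
        have := hterm0 i
        rw [hbi, one_mul, sub_eq_zero] at this
        exact this
      -- termwise equality in sum ≤ sum
      have h2 : ∀ k ∈ Finset.univ, (G.adjMatrix ℝ) i k * b k = (G.adjMatrix ℝ) i k := by
        apply (Finset.sum_eq_sum_iff_of_le ?_).mp
        · rw [h1, hrow i]
        · intro k _
          rcases hb k with h | h <;> simp [h, G.adjMatrix_apply] <;> split <;> norm_num
      have h3 := h2 j (Finset.mem_univ j)
      rw [G.adjMatrix_apply] at h3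
      simp [hadj] at h3
      exact h3
    by_cases hz : ∀ i, b i = 0
    · left; funext i; exact hz i
    · right
      push_neg at hz
      obtain ⟨i0, hi0⟩ := hz
      have hbi0 : b i0 = 1 := (hb i0).resolve_left hi0
      funext v
      obtain ⟨w⟩ := hconn i0 v
      exact walk_closed w (fun x => b x = 1) hclosed hbi0
  · intro h c hc
    rcases h with h | h <;> rw [h]
    · rw [hΦ0]; exact hub c hc
    · rw [hΦ1]; exact hub c hc
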